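/- arXiv:1812.08405 — 2 statements merged into one kernel-verified Lean document; each statement's English description precedes it below -/
import Mathlib

section
/- Let α ≥ 1. For complex numbers u, v and vectors ∇u, ∇v (gradients), the pointwise bound |∇(f(u+v) - f(u))| ≤ C (|∇u| |v| |u|^{α-1} + |∇u| |v|^α + |∇v| |u|^α + |∇v| |v|^α) holds, where f(z) = |z|^α z and ∇f(u) = ∂_z f(u) ∇u + ∂_{z̄} f(u) conj(∇u) with ∂_z f(z) = ((α+2)/2)|z|^α and ∂_{z̄} f(z) = (α/2)|z|^{α-2} z². -/
open Complex

/-- The formal gradient of `f(z) = |z|^α z`: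
`∇f(u) = ∂_z f(u) ∇u + ∂_{z̄} f(u) conj(∇u)`, where `∂_z f(z) = ((α+2)/2)|z|^α` and
`∂_{z̄} f(z) = (α/2)|z|^{α-2} z²`, and `conj` acts componentwise on the gradient vector. -/
noncomputable def gradF (d : ℕ) (α : ℝ) (u : ℂ) (du : EuclideanSpace ℂ (Fin d)) :
    EuclideanSpace ℂ (Fin d) :=
  ((((α + 2) / 2 * ‖u‖ ^ α : ℝ) : ℂ)) • du
    + ((((α / 2 * ‖u‖ ^ (α - 2) : ℝ) : ℂ)) * u ^ 2) •
        (show EuclideanSpace ℂ (Fin d) from WithLp.toLp 2 (fun i => starRingEnd ℂ (du i)))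


/-- MVT Lipschitz bound for `rpow` on `[t, s]` with `t > 0`. -/
lemma mvt_rpow {β t s : ℝ} (ht : 0 < t) (hts : t ≤ s) :
    |s ^ β - t ^ β| ≤ |β| * max (t ^ (β - 1)) (s ^ (β - 1)) * (s - t) := by
  have h := Convex.norm_image_sub_le_of_norm_hasDerivWithin_le
    (f := fun x : ℝ => x ^ β) (f' := fun x : ℝ => β * x ^ (β - 1))
    (s := Set.Icc t s) (C := |β| * max (t ^ (β - 1)) (s ^ (β - 1)))
    (fun x hx => (Real.hasDerivAt_rpow_const (Or.inl (ne_of_gt (lt_of_lt_of_le ht hx.1)))).hasDerivWithinAt)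
    (fun x hx => by
      have hx0 : 0 < x := lt_of_lt_of_le ht hx.1
      have hb : x ^ (β - 1) ≤ max (t ^ (β - 1)) (s ^ (β - 1)) := by
        rcases le_or_gt 0 (β - 1) with hb1 | hb1
        · exact le_max_of_le_right (Real.rpow_le_rpow hx0.le hx.2 hb1)
        · exact le_max_of_le_left (Real.rpow_le_rpow_of_nonpos ht hx.1 hb1.le)
      rw [Real.norm_eq_abs, abs_mul, _root_.abs_of_nonneg (Real.rpow_nonneg hx0.le _)]
      exact mul_le_mul_of_nonneg_left hb (abs_nonneg β))
    (convex_Icc t s) (Set.left_mem_Icc.2 hts) (Set.right_mem_Icc.2 hts)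
  simpa [Real.norm_eq_abs, _root_.abs_of_nonneg (sub_nonneg.2 hts)] using h

/-- `(a+b)^p ≤ 2^p (a^p + b^p)` for `p ≥ 0`. -/
lemma add_rpow_le {a b p : ℝ} (ha : 0 ≤ a) (hb : 0 ≤ b) (hp : 0 ≤ p) :
    (a + b) ^ p ≤ 2 ^ p * (a ^ p + b ^ p) := by
  have h1 : a + b ≤ 2 * max a b := by
    rcases max_cases a b with ⟨h, h'⟩ | ⟨h, h'⟩ <;> rw [h] <;> linarith
  calc (a + b) ^ p ≤ (2 * max a b) ^ p :=
        Real.rpow_le_rpow (by positivity) h1 hp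
    _ = 2 ^ p * (max a b) ^ p := Real.mul_rpow (by norm_num) (le_max_of_le_left ha)
    _ ≤ 2 ^ p * (a ^ p + b ^ p) := by
        refine mul_le_mul_of_nonneg_left ?_ (by positivity)
        rcases max_cases a b with ⟨h, _⟩ | ⟨h, _⟩ <;> rw [h]
        · nlinarith [Real.rpow_nonneg hb p]
        · nlinarith [Real.rpow_nonneg ha p]

/-- `|x^α - y^α| ≤ α (x^(α-1) + y^(α-1)) |x - y|` for `α ≥ 1`, `x, y ≥ 0`. -/
lemma rpow_sub_rpow_le {α x y : ℝ} (hα : 1 ≤ α) (hx : 0 ≤ x) (hy : 0 ≤ y) :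
    |x ^ α - y ^ α| ≤ α * (x ^ (α - 1) + y ^ (α - 1)) * |x - y| := by
  have key : ∀ a b : ℝ, 0 ≤ b → b ≤ a →
      |a ^ α - b ^ α| ≤ α * (a ^ (α - 1) + b ^ (α - 1)) * |a - b| := by
    intro a b hb hba
    have ha : 0 ≤ a := hb.trans hba
    have h := Convex.norm_image_sub_le_of_norm_hasDerivWithin_le
      (f := fun x : ℝ => x ^ α) (f' := fun x : ℝ => α * x ^ (α - 1))
      (s := Set.Icc (0:ℝ) a) (C := α * a ^ (α - 1))
      (fun x hx => (Real.hasDerivAt_rpow_const (Or.inr hα)).hasDerivWithinAt)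
      (fun x hx => by
        rw [Real.norm_eq_abs, abs_mul, _root_.abs_of_nonneg (by linarith : (0:ℝ) ≤ α),
          _root_.abs_of_nonneg (Real.rpow_nonneg hx.1 _)]
        exact mul_le_mul_of_nonneg_left
          (Real.rpow_le_rpow hx.1 hx.2 (by linarith)) (by linarith))
      (convex_Icc 0 a) (Set.mem_Icc.2 ⟨hb, hba⟩) (Set.mem_Icc.2 ⟨ha, le_refl a⟩)
    rw [Real.norm_eq_abs, Real.norm_eq_abs] at h
    refine h.trans ?_
    have h1 : 0 ≤ b ^ (α - 1) := Real.rpow_nonneg hb _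
    have h2 : 0 ≤ |a - b| := abs_nonneg _
    have h3 : 0 ≤ a ^ (α - 1) := Real.rpow_nonneg ha _
    nlinarith [mul_nonneg h1 h2]
  rcases le_total y x with h | h
  · exact key x y hy h
  · rw [abs_sub_comm, abs_sub_comm x y]
    refine (key y x hx h).trans (le_of_eq (by ring))

/-- If `s/2 ≤ t ≤ s` then `t^β ≤ 4 s^β` for `β ≥ -2`. -/
lemma comp_rpow {β s t : ℝ} (hs : 0 < s) (hst : s / 2 ≤ t) (hts : t ≤ s) (hβ : -2 ≤ β) :
    t ^ β ≤ 4 * s ^ β := by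
  have ht : 0 < t := lt_of_lt_of_le (by linarith) hst
  rcases le_or_gt 0 β with h | h
  · have := Real.rpow_le_rpow ht.le hts h
    nlinarith [Real.rpow_nonneg hs.le β]
  · have h1 : t ^ β ≤ (s / 2) ^ β :=
      Real.rpow_le_rpow_of_nonpos (by linarith) hst h.le
    have h2 : (s / 2) ^ β = s ^ β / 2 ^ β := Real.div_rpow hs.le (by norm_num : (0:ℝ) ≤ 2) β
    have h3 : ((2:ℝ)) ^ (-2:ℝ) ≤ (2:ℝ) ^ β :=
      Real.rpow_le_rpow_of_exponent_le (by norm_num) hβ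
    have h4 : ((2:ℝ)) ^ (-2:ℝ) = 1/4 := by
      rw [Real.rpow_neg (by norm_num), show ((2:ℝ)) ^ (2:ℝ) = 4 by
        rw [show (2:ℝ) = ((2:ℕ):ℝ) from rfl, Real.rpow_natCast]; norm_num]
      norm_num
    have h5 : (0:ℝ) < 2 ^ β := Real.rpow_pos_of_pos (by norm_num) β
    have h6 : 0 ≤ s ^ β := Real.rpow_nonneg hs.le β
    rw [h2] at h1
    refine h1.trans ?_
    rw [div_le_iff₀ h5]
    nlinarith [mul_le_mul_of_nonneg_left (h4 ▸ h3) h6]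

noncomputable def gg (α : ℝ) (z : ℂ) : ℂ := ((‖z‖ ^ (α - 2) : ℝ) : ℂ) * z ^ 2

lemma gg_abs {α : ℝ} (hα : 1 ≤ α) (z : ℂ) : ‖gg α z‖ = ‖z‖ ^ α := by
  rcases eq_or_ne z 0 with rfl | hz
  · simp [gg, Real.zero_rpow (show α ≠ 0 by linarith)]
  · have h0 : 0 < ‖z‖ := norm_pos_iff.mpr hz
    rw [gg, norm_mul, Complex.norm_real, Real.norm_eq_abs, norm_pow,
      _root_.abs_of_nonneg (Real.rpow_nonneg h0.le _),
      ← Real.rpow_natCast (‖z‖) 2, ← Real.rpow_add h0]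
    norm_num

lemma gg_sub_le {α : ℝ} (hα : 1 ≤ α) {z w : ℂ} (hzw : ‖w‖ ≤ ‖z‖) :
    ‖gg α z - gg α w‖
      ≤ (8 + 4 * |α - 2|) * ‖z - w‖
          * (‖z‖ ^ (α - 1) + ‖w‖ ^ (α - 1)) := by
  set s := ‖z‖ with hsdef
  set t := ‖w‖ with htdef
  set dd := ‖z - w‖ with hddef
  have hs : 0 ≤ s := norm_nonneg z
  have ht0 : 0 ≤ t := norm_nonneg w
  have hdd : 0 ≤ dd := norm_nonneg _
  have hs1 : 0 ≤ s ^ (α - 1) := Real.rpow_nonneg hs _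
  have ht1 : 0 ≤ t ^ (α - 1) := Real.rpow_nonneg ht0 _
  have habs2 : 0 ≤ |α - 2| := abs_nonneg _
  rcases le_or_gt s (2 * dd) with hcase | hcase
  · have h1 : ‖gg α z - gg α w‖ ≤ s ^ α + t ^ α := by
      calc ‖gg α z - gg α w‖ ≤ ‖gg α z‖ + ‖gg α w‖ := by
            exact norm_sub_le _ _
        _ = s ^ α + t ^ α := by rw [gg_abs hα, gg_abs hα]
    have hsplit : ∀ x : ℝ, 0 ≤ x → x ^ α = x * x ^ (α - 1) := by
      intro x hx
      have h := Real.rpow_add' hx (show (1:ℝ) + (α - 1) ≠ 0 by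
        rw [show (1:ℝ) + (α - 1) = α by ring]; linarith)
      rw [show (1:ℝ) + (α - 1) = α by ring] at h
      rw [h, Real.rpow_one]
    rw [hsplit s hs, hsplit t ht0] at h1
    have ht2 : t ≤ 2 * dd := hzw.trans hcase
    refine h1.trans ?_
    nlinarith [mul_nonneg hdd hs1, mul_nonneg hdd ht1, mul_nonneg (mul_nonneg habs2 hdd) hs1,
      mul_nonneg (mul_nonneg habs2 hdd) ht1, mul_le_mul_of_nonneg_right hcase hs1,
      mul_le_mul_of_nonneg_right ht2 ht1]
  · -- comparable case : `t > s/2 > 0`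
    have hsub : |t - s| ≤ dd := by
      rw [hddef, norm_sub_rev]
      exact abs_norm_sub_norm_le w z
    have hspos : 0 < s := lt_of_le_of_lt (by linarith) hcase
    have ht : s / 2 < t := by
      have := abs_le.1 hsub
      linarith
    have htpos : 0 < t := lt_of_le_of_lt (by linarith) ht
    have hst : s - t ≤ dd := by have := abs_le.1 hsub; linarith
    -- decomposition
    have hdec : gg α z - gg α w
        = ((s ^ (α - 2) - t ^ (α - 2) : ℝ) : ℂ) * z ^ 2
          + ((t ^ (α - 2) : ℝ) : ℂ) * (z ^ 2 - w ^ 2) := by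
      simp only [gg, ← hsdef, ← htdef]
      push_cast
      ring
    have habs : ‖gg α z - gg α w‖
        ≤ |s ^ (α - 2) - t ^ (α - 2)| * s ^ 2 + t ^ (α - 2) * ‖z ^ 2 - w ^ 2‖ := by
      rw [hdec]
      refine (norm_add_le _ _).trans ?_
      rw [norm_mul, norm_mul, Complex.norm_real, Complex.norm_real, Real.norm_eq_abs, Real.norm_eq_abs, norm_pow,
        _root_.abs_of_nonneg (Real.rpow_nonneg ht0 _), ← hsdef]
    -- first term
    have hmvt : |s ^ (α - 2) - t ^ (α - 2)|
        ≤ |α - 2| * max (t ^ (α - 2 - 1)) (s ^ (α - 2 - 1)) * (s - t) := mvt_rpow htpos hzw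
    have hmax : max (t ^ (α - 2 - 1)) (s ^ (α - 2 - 1)) ≤ 4 * s ^ (α - 3) := by
      rw [show α - 2 - 1 = α - 3 by ring]
      refine max_le (comp_rpow hspos ht.le hzw (by linarith)) ?_
      nlinarith [Real.rpow_nonneg hs (α - 3)]
    have h1 : |s ^ (α - 2) - t ^ (α - 2)| ≤ |α - 2| * (4 * s ^ (α - 3)) * dd := by
      refine hmvt.trans ?_
      have e1 : |α - 2| * max (t ^ (α - 2 - 1)) (s ^ (α - 2 - 1)) * (s - t)
          ≤ |α - 2| * (4 * s ^ (α - 3)) * (s - t) := by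
        have : 0 ≤ s - t := by linarith
        exact mul_le_mul_of_nonneg_right (mul_le_mul_of_nonneg_left hmax habs2) this
      refine e1.trans ?_
      exact mul_le_mul_of_nonneg_left hst (by positivity)
    -- second term
    have hz2 : ‖z ^ 2 - w ^ 2‖ ≤ dd * (2 * s) := by
      have : z ^ 2 - w ^ 2 = (z - w) * (z + w) := by ring
      rw [this, norm_mul, ← hddef]
      refine mul_le_mul_of_nonneg_left ?_ hdd
      exact (norm_add_le z w).trans (by rw [← hsdef, ← htdef]; linarith)
    have ht4 : t ^ (α - 2) ≤ 4 * s ^ (α - 2) := comp_rpow hspos ht.le hzw (by linarith)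
    have h2 : t ^ (α - 2) * ‖z ^ 2 - w ^ 2‖ ≤ 4 * s ^ (α - 2) * (dd * (2 * s)) := by
      refine mul_le_mul ht4 hz2 (norm_nonneg _) (by positivity)
    -- recombine powers
    have e3 : s ^ (α - 3) * s ^ 2 = s ^ (α - 1) := by
      rw [← Real.rpow_natCast s 2, ← Real.rpow_add hspos]; congr 1; push_cast; ring
    have e2 : s ^ (α - 2) * s = s ^ (α - 1) := by
      nth_rewrite 2 [← Real.rpow_one s]
      rw [← Real.rpow_add hspos]; congr 1; ring
    have htotal : ‖gg α z - gg α w‖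
        ≤ 4 * |α - 2| * dd * s ^ (α - 1) + 8 * dd * s ^ (α - 1) := by
      refine habs.trans ?_
      have b1 : |s ^ (α - 2) - t ^ (α - 2)| * s ^ 2 ≤ 4 * |α - 2| * dd * s ^ (α - 1) := by
        calc |s ^ (α - 2) - t ^ (α - 2)| * s ^ 2 ≤ |α - 2| * (4 * s ^ (α - 3)) * dd * s ^ 2 :=
              mul_le_mul_of_nonneg_right h1 (by positivity)
          _ = 4 * |α - 2| * dd * (s ^ (α - 3) * s ^ 2) := by ring
          _ = 4 * |α - 2| * dd * s ^ (α - 1) := by rw [e3]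
      have b2 : t ^ (α - 2) * ‖z ^ 2 - w ^ 2‖ ≤ 8 * dd * s ^ (α - 1) := by
        refine h2.trans (le_of_eq ?_)
        calc 4 * s ^ (α - 2) * (dd * (2 * s)) = 8 * dd * (s ^ (α - 2) * s) := by ring
          _ = 8 * dd * s ^ (α - 1) := by rw [e2]
      linarith
    refine htotal.trans ?_
    nlinarith [mul_nonneg hdd ht1, mul_nonneg (mul_nonneg habs2 hdd) ht1,
      mul_nonneg (mul_nonneg habs2 hdd) hs1, mul_nonneg hdd hs1]

lemma gg_sub_le' {α : ℝ} (hα : 1 ≤ α) (z w : ℂ) :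
    ‖gg α z - gg α w‖
      ≤ (8 + 4 * |α - 2|) * ‖z - w‖
          * (‖z‖ ^ (α - 1) + ‖w‖ ^ (α - 1)) := by
  rcases le_total (‖w‖) (‖z‖) with h | h
  · exact gg_sub_le hα h
  · rw [norm_sub_rev (gg α z), norm_sub_rev z w]
    exact (gg_sub_le hα h).trans (le_of_eq (by ring))

lemma rpow_split {α x : ℝ} (hα : 1 ≤ α) (hx : 0 ≤ x) : x ^ α = x * x ^ (α - 1) := by
  have h := Real.rpow_add' hx (show (1:ℝ) + (α - 1) ≠ 0 by
    rw [show (1:ℝ) + (α - 1) = α by ring]; linarith)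
  rw [show (1:ℝ) + (α - 1) = α by ring] at h
  rw [h, Real.rpow_one]

set_option maxHeartbeats 2000000 in
/-- For `α ≥ 1`, the pointwise bound
`|∇(f(u+v) - f(u))| ≤ C (|∇u||v||u|^{α-1} + |∇u||v|^α + |∇v||u|^α + |∇v||v|^α)`. -/
theorem stmt1 (d : ℕ) (α : ℝ) (hα : 1 ≤ α) :
    ∃ C > 0, ∀ (u v : ℂ) (du dv : EuclideanSpace ℂ (Fin d)),
      ‖gradF d α (u + v) (du + dv) - gradF d α u du‖
        ≤ C * (‖du‖ * ‖v‖ * ‖u‖ ^ (α - 1)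
            + ‖du‖ * ‖v‖ ^ α
            + ‖dv‖ * ‖u‖ ^ α
            + ‖dv‖ * ‖v‖ ^ α) := by
  have hα0 : (0:ℝ) ≤ α := by linarith
  set Cg : ℝ := 8 + 4 * |α - 2| with hCgdef
  have hCg : 0 ≤ Cg := by positivity
  have h2a : (0:ℝ) < 2 ^ (α - 1) + 1 := by positivity
  have h2b : (0:ℝ) < 2 ^ α := Real.rpow_pos_of_pos (by norm_num) α
  set p1 : ℝ := (α + 2) / 2 * α * (2 ^ (α - 1) + 1) with hp1def
  set p2 : ℝ := α / 2 * Cg * (2 ^ (α - 1) + 1) with hp2def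
  set p3 : ℝ := (α + 2) / 2 * 2 ^ α with hp3def
  set p4 : ℝ := α / 2 * 2 ^ α with hp4def
  have hp1 : 0 ≤ p1 := by
    refine mul_nonneg (mul_nonneg (by linarith) hα0) h2a.le
  have hp2 : 0 ≤ p2 := mul_nonneg (mul_nonneg (by linarith) hCg) h2a.le
  have hp3 : 0 ≤ p3 := mul_nonneg (by linarith) h2b.le
  have hp4 : 0 ≤ p4 := mul_nonneg (by linarith) h2b.le
  set K : ℝ := p1 + p2 + p3 + p4 with hKdef
  refine ⟨2 * K + 1, by linarith, ?_⟩
  intro u v du dv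
  set s : ℝ := ‖u + v‖ with hsdef
  set t : ℝ := ‖u‖ with htdef
  set r : ℝ := ‖v‖ with hrdef
  have hs0 : 0 ≤ s := norm_nonneg _
  have ht0 : 0 ≤ t := norm_nonneg _
  have hr0 : 0 ≤ r := norm_nonneg _
  have hs1 : 0 ≤ s ^ (α - 1) := Real.rpow_nonneg hs0 _
  have ht1 : 0 ≤ t ^ (α - 1) := Real.rpow_nonneg ht0 _
  have hr1 : 0 ≤ r ^ (α - 1) := Real.rpow_nonneg hr0 _
  set X : ℝ := r * t ^ (α - 1) + r ^ α with hXdef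
  set Y : ℝ := t ^ α + r ^ α with hYdef
  have hX : 0 ≤ X := by
    refine add_nonneg (mul_nonneg hr0 ht1) (Real.rpow_nonneg hr0 _)
  have hY : 0 ≤ Y := add_nonneg (Real.rpow_nonneg ht0 _) (Real.rpow_nonneg hr0 _)
  -- basic triangle facts
  have hstr : s ≤ t + r := by
    rw [hsdef, htdef, hrdef]; exact norm_add_le u v
  have hsub : |s - t| ≤ r := by
    have h := abs_norm_sub_norm_le (u + v) u
    simpa [← hsdef, ← htdef, ← hrdef] using h
  -- power comparison
  have hpow : s ^ (α - 1) ≤ 2 ^ (α - 1) * (t ^ (α - 1) + r ^ (α - 1)) :=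
    (Real.rpow_le_rpow hs0 hstr (by linarith)).trans (add_rpow_le ht0 hr0 (by linarith))
  have hpowα : s ^ α ≤ 2 ^ α * Y :=
    (Real.rpow_le_rpow hs0 hstr hα0).trans (add_rpow_le ht0 hr0 hα0)
  have hfold : r * r ^ (α - 1) = r ^ α := (rpow_split hα hr0).symm
  -- the core product bound
  have hcore : (s ^ (α - 1) + t ^ (α - 1)) * r ≤ (2 ^ (α - 1) + 1) * X := by
    have h1 : s ^ (α - 1) + t ^ (α - 1) ≤ (2 ^ (α - 1) + 1) * (t ^ (α - 1) + r ^ (α - 1)) := by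
      nlinarith [Real.rpow_nonneg (show (0:ℝ) ≤ 2 by norm_num) (α - 1)]
    calc (s ^ (α - 1) + t ^ (α - 1)) * r
        ≤ (2 ^ (α - 1) + 1) * (t ^ (α - 1) + r ^ (α - 1)) * r :=
          mul_le_mul_of_nonneg_right h1 hr0
      _ = (2 ^ (α - 1) + 1) * (r * t ^ (α - 1) + r * r ^ (α - 1)) := by ring
      _ = (2 ^ (α - 1) + 1) * X := by rw [hfold]
  -- scalar coefficients
  set A1 : ℝ := (α + 2) / 2 * s ^ α with hA1def
  set A0 : ℝ := (α + 2) / 2 * t ^ α with hA0def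
  set B1 : ℂ := ((α / 2 * s ^ (α - 2) : ℝ) : ℂ) * (u + v) ^ 2 with hB1def
  set B0 : ℂ := ((α / 2 * t ^ (α - 2) : ℝ) : ℂ) * u ^ 2 with hB0def
  -- B in terms of gg
  have hB1gg : B1 = ((α / 2 : ℝ) : ℂ) * gg α (u + v) := by
    rw [hB1def, gg, ← hsdef]; push_cast; ring
  have hB0gg : B0 = ((α / 2 : ℝ) : ℂ) * gg α u := by
    rw [hB0def, gg, ← htdef]; push_cast; ring
  -- scalar bounds
  have hS1 : |A1 - A0| ≤ K * X := by
    have e : |A1 - A0| = (α + 2) / 2 * |s ^ α - t ^ α| := by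
      rw [hA1def, hA0def, ← mul_sub, abs_mul, _root_.abs_of_nonneg (by linarith : (0:ℝ) ≤ (α + 2) / 2)]
    rw [e]
    have h1 : |s ^ α - t ^ α| ≤ α * (s ^ (α - 1) + t ^ (α - 1)) * |s - t| :=
      rpow_sub_rpow_le hα hs0 ht0
    have h2 : α * (s ^ (α - 1) + t ^ (α - 1)) * |s - t| ≤ α * ((2 ^ (α - 1) + 1) * X) := by
      have h3 : (s ^ (α - 1) + t ^ (α - 1)) * |s - t| ≤ (s ^ (α - 1) + t ^ (α - 1)) * r :=
        mul_le_mul_of_nonneg_left hsub (by linarith)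
      calc α * (s ^ (α - 1) + t ^ (α - 1)) * |s - t|
          = α * ((s ^ (α - 1) + t ^ (α - 1)) * |s - t|) := by ring
        _ ≤ α * ((2 ^ (α - 1) + 1) * X) :=
            mul_le_mul_of_nonneg_left (h3.trans hcore) hα0
    have h4 : (α + 2) / 2 * |s ^ α - t ^ α| ≤ (α + 2) / 2 * (α * ((2 ^ (α - 1) + 1) * X)) :=
      mul_le_mul_of_nonneg_left (h1.trans h2) (by linarith)
    refine h4.trans ?_
    have : (α + 2) / 2 * (α * ((2 ^ (α - 1) + 1) * X)) = p1 * X := by rw [hp1def]; ring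
    rw [this]
    exact mul_le_mul_of_nonneg_right (by rw [hKdef]; linarith) hX
  have hS2 : |A1| ≤ K * Y := by
    rw [hA1def, _root_.abs_of_nonneg (mul_nonneg (by linarith) (Real.rpow_nonneg hs0 _))]
    have h1 : (α + 2) / 2 * s ^ α ≤ (α + 2) / 2 * (2 ^ α * Y) :=
      mul_le_mul_of_nonneg_left hpowα (by linarith)
    refine h1.trans ?_
    have : (α + 2) / 2 * (2 ^ α * Y) = p3 * Y := by rw [hp3def]; ring
    rw [this]
    exact mul_le_mul_of_nonneg_right (by rw [hKdef]; linarith) hY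
  have hS3 : ‖B1 - B0‖ ≤ K * X := by
    rw [hB1gg, hB0gg, ← mul_sub, norm_mul, Complex.norm_real, Real.norm_eq_abs,
      _root_.abs_of_nonneg (by linarith : (0:ℝ) ≤ α / 2)]
    have h1 : ‖gg α (u + v) - gg α u‖
        ≤ Cg * ‖(u + v) - u‖ * (s ^ (α - 1) + t ^ (α - 1)) := by
      rw [hCgdef, hsdef, htdef]
      exact gg_sub_le' hα (u + v) u
    have h2 : ‖(u + v) - u‖ = r := by rw [hrdef]; congr 1; ring
    rw [h2] at h1
    have h3 : Cg * r * (s ^ (α - 1) + t ^ (α - 1)) ≤ Cg * ((2 ^ (α - 1) + 1) * X) := by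
      calc Cg * r * (s ^ (α - 1) + t ^ (α - 1))
          = Cg * ((s ^ (α - 1) + t ^ (α - 1)) * r) := by ring
        _ ≤ Cg * ((2 ^ (α - 1) + 1) * X) := mul_le_mul_of_nonneg_left hcore hCg
    have h4 : α / 2 * ‖gg α (u + v) - gg α u‖
        ≤ α / 2 * (Cg * ((2 ^ (α - 1) + 1) * X)) :=
      mul_le_mul_of_nonneg_left (h1.trans h3) (by linarith)
    refine h4.trans ?_
    have : α / 2 * (Cg * ((2 ^ (α - 1) + 1) * X)) = p2 * X := by rw [hp2def]; ring
    rw [this]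
    exact mul_le_mul_of_nonneg_right (by rw [hKdef]; linarith) hX
  have hS4 : ‖B1‖ ≤ K * Y := by
    rw [hB1gg, norm_mul, Complex.norm_real, Real.norm_eq_abs, _root_.abs_of_nonneg (by linarith : (0:ℝ) ≤ α / 2),
      gg_abs hα, ← hsdef]
    have h1 : α / 2 * s ^ α ≤ α / 2 * (2 ^ α * Y) := mul_le_mul_of_nonneg_left hpowα (by linarith)
    refine h1.trans ?_
    have : α / 2 * (2 ^ α * Y) = p4 * Y := by rw [hp4def]; ring
    rw [this]
    exact mul_le_mul_of_nonneg_right (by rw [hKdef]; linarith) hY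
  -- conjugation vector
  set cj : EuclideanSpace ℂ (Fin d) → EuclideanSpace ℂ (Fin d) :=
    fun x => (show EuclideanSpace ℂ (Fin d) from WithLp.toLp 2 (fun i => starRingEnd ℂ (x i))) with hcjdef
  have hcj : ∀ x : EuclideanSpace ℂ (Fin d), ‖cj x‖ = ‖x‖ := by
    intro x
    rw [hcjdef]
    simp [EuclideanSpace.norm_eq]
  -- decomposition of the difference
  have hdecomp : gradF d α (u + v) (du + dv) - gradF d α u du
      = (((A1 - A0 : ℝ)) : ℂ) • du + ((A1 : ℝ) : ℂ) • dv + (B1 - B0) • cj du + B1 • cj dv := by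
    ext i
    simp only [gradF, hcjdef, hA1def, hA0def, hB1def, hB0def, ← hsdef, ← htdef,
      PiLp.add_apply, PiLp.sub_apply, PiLp.smul_apply, smul_eq_mul, map_add, PiLp.toLp_apply]
    push_cast
    ring
  rw [hdecomp]
  have hn1 : ‖(((A1 - A0 : ℝ)) : ℂ) • du‖ = |A1 - A0| * ‖du‖ := by
    rw [norm_smul, Complex.norm_real, Real.norm_eq_abs]
  have hn2 : ‖((A1 : ℝ) : ℂ) • dv‖ = |A1| * ‖dv‖ := by
    rw [norm_smul, Complex.norm_real, Real.norm_eq_abs]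
  have hn3 : ‖(B1 - B0) • cj du‖ = ‖B1 - B0‖ * ‖du‖ := by
    rw [norm_smul, hcj]
  have hn4 : ‖B1 • cj dv‖ = ‖B1‖ * ‖dv‖ := by
    rw [norm_smul, hcj]
  have htri : ‖(((A1 - A0 : ℝ)) : ℂ) • du + ((A1 : ℝ) : ℂ) • dv + (B1 - B0) • cj du + B1 • cj dv‖
      ≤ |A1 - A0| * ‖du‖ + |A1| * ‖dv‖ + ‖B1 - B0‖ * ‖du‖ + ‖B1‖ * ‖dv‖ := by
    have t1 := norm_add_le ((((A1 - A0 : ℝ)) : ℂ) • du + ((A1 : ℝ) : ℂ) • dv + (B1 - B0) • cj du)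
      (B1 • cj dv)
    have t2 := norm_add_le ((((A1 - A0 : ℝ)) : ℂ) • du + ((A1 : ℝ) : ℂ) • dv) ((B1 - B0) • cj du)
    have t3 := norm_add_le ((((A1 - A0 : ℝ)) : ℂ) • du) (((A1 : ℝ) : ℂ) • dv)
    rw [hn1] at t3
    rw [hn2] at t3
    rw [hn3] at t2
    rw [hn4] at t1
    linarith
  refine htri.trans ?_
  have hdu : (0:ℝ) ≤ ‖du‖ := norm_nonneg _
  have hdv : (0:ℝ) ≤ ‖dv‖ := norm_nonneg _
  have f1 : |A1 - A0| * ‖du‖ ≤ K * X * ‖du‖ := mul_le_mul_of_nonneg_right hS1 hdu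
  have f2 : |A1| * ‖dv‖ ≤ K * Y * ‖dv‖ := mul_le_mul_of_nonneg_right hS2 hdv
  have f3 : ‖B1 - B0‖ * ‖du‖ ≤ K * X * ‖du‖ := mul_le_mul_of_nonneg_right hS3 hdu
  have f4 : ‖B1‖ * ‖dv‖ ≤ K * Y * ‖dv‖ := mul_le_mul_of_nonneg_right hS4 hdv
  have hsum : (0:ℝ) ≤ ‖du‖ * r * t ^ (α - 1) + ‖du‖ * r ^ α + ‖dv‖ * t ^ α + ‖dv‖ * r ^ α := by
    have := Real.rpow_nonneg hr0 α
    have := Real.rpow_nonneg ht0 α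
    positivity
  calc |A1 - A0| * ‖du‖ + |A1| * ‖dv‖ + ‖B1 - B0‖ * ‖du‖ + ‖B1‖ * ‖dv‖
      ≤ K * X * ‖du‖ + K * Y * ‖dv‖ + K * X * ‖du‖ + K * Y * ‖dv‖ := by linarith
    _ = 2 * K * (‖du‖ * r * t ^ (α - 1) + ‖du‖ * r ^ α + ‖dv‖ * t ^ α + ‖dv‖ * r ^ α) := by
        rw [hXdef, hYdef]; ring
    _ ≤ (2 * K + 1) * (‖du‖ * r * t ^ (α - 1) + ‖du‖ * r ^ α + ‖dv‖ * t ^ α + ‖dv‖ * r ^ α) :=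
        mul_le_mul_of_nonneg_right (by linarith) hsum
end

section
/- Radial Sobolev embedding: for d ≥ 2 there exists C = C(d) > 0 such that for every radial function f ∈ H¹(ℝ^d), sup_{x ≠ 0} |x|^{(d-1)/2} |f(x)| ≤ C ‖f‖_{L²}^{1/2} ‖∇f‖_{L²}^{1/2}. -/
open MeasureTheory

open Set ENNReal in
lemma my_lintegral_polar {E : Type*} [NormedAddCommGroup E] [NormedSpace ℝ E]
    [MeasurableSpace E] [BorelSpace E] [Nontrivial E] [FiniteDimensional ℝ E]
    (μ : Measure E) [μ.IsAddHaarMeasure] {f : ℝ → ℝ≥0∞} (hf : Measurable f) :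
    ∫⁻ x, f ‖x‖ ∂μ = (Module.finrank ℝ E) * μ (Metric.ball 0 1) *
      ∫⁻ y in Ioi (0:ℝ), ENNReal.ofReal (y ^ (Module.finrank ℝ E - 1)) * f y := by
  have h1 : ∫⁻ x, f ‖x‖ ∂μ = ∫⁻ x : ({(0:E)}ᶜ : Set E), f ‖x.1‖ ∂(μ.comap Subtype.val) := by
    rw [lintegral_subtype_comap (measurableSet_singleton (0:E)).compl (fun x => f ‖x‖),
      MeasureTheory.restrict_compl_singleton]
  have h2 : ∫⁻ x : ({(0:E)}ᶜ : Set E), f ‖x.1‖ ∂(μ.comap Subtype.val)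
      = ∫⁻ p : Metric.sphere (0:E) 1 × Ioi (0:ℝ), f p.2
          ∂(μ.toSphere.prod (.volumeIoiPow (Module.finrank ℝ E - 1))) :=
    by simpa only [Function.comp_def, homeomorphUnitSphereProd_apply_snd_coe] using
      μ.measurePreserving_homeomorphUnitSphereProd.lintegral_comp_emb
        (Homeomorph.measurableEmbedding _) (f ∘ Subtype.val ∘ Prod.snd)
  have h3 : ∫⁻ p : Metric.sphere (0:E) 1 × Ioi (0:ℝ), f p.2
          ∂(μ.toSphere.prod (.volumeIoiPow (Module.finrank ℝ E - 1)))
      = μ.toSphere univ * ∫⁻ y : Ioi (0:ℝ), f y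
          ∂(Measure.volumeIoiPow (Module.finrank ℝ E - 1)) := by
    rw [lintegral_prod (fun p : Metric.sphere (0:E) 1 × Ioi (0:ℝ) => f ↑p.2) (by fun_prop)]
    simp [lintegral_const, mul_comm]
  have h4 : ∫⁻ y : Ioi (0:ℝ), f y ∂(Measure.volumeIoiPow (Module.finrank ℝ E - 1))
      = ∫⁻ y in Ioi (0:ℝ), ENNReal.ofReal (y ^ (Module.finrank ℝ E - 1)) * f y := by
    rw [Measure.volumeIoiPow,
      lintegral_withDensity_eq_lintegral_mul _
        ((measurable_subtype_coe.pow_const _).ennreal_ofReal)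
        (show Measurable (fun y : (Ioi (0:ℝ)) => f ↑y) from hf.comp measurable_subtype_coe),
      ← lintegral_subtype_comap measurableSet_Ioi
        (fun y => ENNReal.ofReal (y ^ (Module.finrank ℝ E - 1)) * f y)]
    rfl
  rw [h1, h2, h3, h4, Measure.toSphere_apply_univ, mul_assoc]

open Set ENNReal in
lemma my_integrableOn_polar {E : Type*} [NormedAddCommGroup E] [NormedSpace ℝ E]
    [MeasurableSpace E] [BorelSpace E] [Nontrivial E] [FiniteDimensional ℝ E]
    (μ : Measure E) [μ.IsAddHaarMeasure] {F : ℝ → ℝ} (hFm : Measurable F)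
    (hF0 : ∀ y, 0 ≤ F y) (hint : Integrable (fun x => F ‖x‖) μ) :
    IntegrableOn (fun y => y ^ (Module.finrank ℝ E - 1) * F y) (Ioi (0:ℝ)) := by
  refine ⟨((measurable_id.pow_const _).mul hFm).aestronglyMeasurable, ?_⟩
  have hfin : ∫⁻ x, ENNReal.ofReal (F ‖x‖) ∂μ < ⊤ :=
    (hasFiniteIntegral_iff_ofReal (Filter.Eventually.of_forall fun x => hF0 _)).mp
      hint.hasFiniteIntegral
  rw [my_lintegral_polar μ hFm.ennreal_ofReal] at hfin
  have hL : ∫⁻ y in Ioi (0:ℝ),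
      ENNReal.ofReal (y ^ (Module.finrank ℝ E - 1)) * ENNReal.ofReal (F y) < ⊤ := by
    refine ENNReal.lt_top_of_mul_ne_top_right hfin.ne (mul_ne_zero ?_ ?_)
    · simpa using Module.finrank_pos.ne'
    · exact (Metric.measure_ball_pos μ 0 one_pos).ne'
  have h0 : 0 ≤ᵐ[volume.restrict (Ioi (0:ℝ))] fun y => y ^ (Module.finrank ℝ E - 1) * F y := by
    filter_upwards [ae_restrict_mem measurableSet_Ioi] with y hy
    exact mul_nonneg (pow_nonneg (le_of_lt hy) _) (hF0 y)
  rw [hasFiniteIntegral_iff_ofReal h0]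
  refine lt_of_le_of_lt (le_of_eq ?_) hL
  refine setLIntegral_congr_fun measurableSet_Ioi (fun y hy => ?_)
  rw [ENNReal.ofReal_mul (pow_nonneg (le_of_lt hy) _)]

lemma my_amgm {p a b : ℝ} (ha : 0 ≤ a) (hb : 0 ≤ b)
    (h : ∀ t : ℝ, 0 < t → p ≤ t * a + t⁻¹ * b) :
    p ≤ 2 * (Real.sqrt a * Real.sqrt b) := by
  rcases eq_or_lt_of_le ha with hA | hA
  · have hp : p ≤ 0 := by
      by_contra hp
      push_neg at hp
      have ht : (0:ℝ) < (b + 1) / p := by positivity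
      have h1 := h _ ht
      have h2 : ((b + 1) / p)⁻¹ = p / (b + 1) := by rw [inv_div]
      rw [← hA, mul_zero, zero_add, h2] at h1
      rw [div_mul_eq_mul_div, le_div_iff₀ (by positivity)] at h1
      nlinarith
    exact hp.trans (by positivity)
  · rcases eq_or_lt_of_le hb with hB | hB
    · have hp : p ≤ 0 := by
        by_contra hp
        push_neg at hp
        have ht : (0:ℝ) < p / (2 * (a + 1)) := by positivity
        have h1 := h _ ht
        rw [← hB, mul_zero, add_zero] at h1
        rw [div_mul_eq_mul_div, le_div_iff₀ (by positivity)] at h1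
        nlinarith
      exact hp.trans (by positivity)
    · have hsa : (0:ℝ) < Real.sqrt a := Real.sqrt_pos.2 hA
      have hsb : (0:ℝ) < Real.sqrt b := Real.sqrt_pos.2 hB
      have ht : (0:ℝ) < Real.sqrt b / Real.sqrt a := by positivity
      have h1 := h _ ht
      have h2 : (Real.sqrt b / Real.sqrt a)⁻¹ = Real.sqrt a / Real.sqrt b := by rw [inv_div]
      have haa : Real.sqrt a * Real.sqrt a = a := Real.mul_self_sqrt ha
      have hbb : Real.sqrt b * Real.sqrt b = b := Real.mul_self_sqrt hb
      have h3 : Real.sqrt b / Real.sqrt a * a + Real.sqrt a / Real.sqrt b * b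
          = 2 * (Real.sqrt a * Real.sqrt b) := by
        field_simp
        nlinarith
      rw [h2] at h1
      linarith [h1, h3.le]

set_option maxHeartbeats 1000000 in
/-- Radial Sobolev (Strauss) embedding: for `d ≥ 2` there exists `C = C(d) > 0` such that for
every radial `f ∈ H¹(ℝ^d)`, `sup_{x ≠ 0} |x|^{(d-1)/2} |f(x)| ≤ C ‖f‖_{L²}^{1/2} ‖∇f‖_{L²}^{1/2}`. -/
theorem stmt5 (d : ℕ) (hd : 2 ≤ d) :
    ∃ C > 0, ∀ f : EuclideanSpace ℝ (Fin d) → ℂ,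
      (∀ x y, ‖x‖ = ‖y‖ → f x = f y) →
      Differentiable ℝ f →
      Integrable (fun x => ‖f x‖ ^ 2) →
      Integrable (fun x => ‖fderiv ℝ f x‖ ^ 2) →
      ∀ x, x ≠ 0 →
        ‖x‖ ^ (((d : ℝ) - 1) / 2) * ‖f x‖
          ≤ C * (∫ y, ‖f y‖ ^ 2) ^ ((1 : ℝ) / 4) * (∫ y, ‖fderiv ℝ f y‖ ^ 2) ^ ((1 : ℝ) / 4) := by
  classical
  haveI : NeZero d := ⟨by omega⟩
  obtain ⟨e, he⟩ : ∃ e : EuclideanSpace ℝ (Fin d), ‖e‖ = 1 :=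
    ⟨EuclideanSpace.single (0 : Fin d) (1:ℝ), by simp [EuclideanSpace.norm_single]⟩
  haveI : Nontrivial (EuclideanSpace ℝ (Fin d)) := nontrivial_of_ne e 0 (fun h => by rw [h] at he; simp at he)
  have hrank : Module.finrank ℝ (EuclideanSpace ℝ (Fin d)) = d := finrank_euclideanSpace_fin
  set cball : ℝ := (volume (Metric.ball (0 : EuclideanSpace ℝ (Fin d)) 1)).toReal with hcball_def
  have hcball : 0 < cball :=
    ENNReal.toReal_pos (Metric.measure_ball_pos volume (0:EuclideanSpace ℝ (Fin d)) one_pos).ne' measure_ball_lt_top.ne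
  set c : ℝ := d * cball with hc_def
  have hc : 0 < c := by
    have : (0:ℝ) < d := by positivity
    positivity
  refine ⟨Real.sqrt (2 / c), Real.sqrt_pos.2 (by positivity), ?_⟩
  intro f hrad hdiff hI1 hI2 x hx
  set g : ℝ → ℂ := fun r => f (r • e) with hg_def
  have hge : ∀ z : EuclideanSpace ℝ (Fin d), f z = g ‖z‖ := by
    intro z
    refine hrad z (‖z‖ • e) ?_
    rw [norm_smul, he, mul_one, Real.norm_eq_abs, abs_of_nonneg (norm_nonneg z)]
  have hgd : ∀ r : ℝ, HasDerivAt g (fderiv ℝ f (r • e) e) r := by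
    intro r
    have h1 : HasDerivAt (fun s : ℝ => s • e) e r := by
      simpa using (hasDerivAt_id r).smul_const e
    exact ((hdiff (r • e)).hasFDerivAt.comp_hasDerivAt r h1)
  have hgdiff : Differentiable ℝ g := fun r => (hgd r).differentiableAt
  have hgc : Continuous g := hgdiff.continuous
  have hgd' : ∀ r : ℝ, HasDerivAt g (deriv g r) r := fun r => (hgdiff r).hasDerivAt
  -- key bound for the derivative of g
  have key : ∀ z : EuclideanSpace ℝ (Fin d), z ≠ 0 → ‖deriv g ‖z‖‖ ≤ ‖fderiv ℝ f z‖ := by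
    intro z hz
    have hr : 0 < ‖z‖ := norm_pos_iff.2 hz
    obtain ⟨u, hu1, hzu⟩ : ∃ u : EuclideanSpace ℝ (Fin d), ‖u‖ = 1 ∧ ‖z‖ • u = z :=
      ⟨‖z‖⁻¹ • z, norm_smul_inv_norm hz, smul_inv_smul₀ hr.ne' z⟩
    have h1 : HasDerivAt (fun s : ℝ => s • u) u ‖z‖ := by
      simpa using (hasDerivAt_id ‖z‖).smul_const u
    have h2 : HasDerivAt (fun s : ℝ => f (s • u)) ((fderiv ℝ f z) u) ‖z‖ := by
      have := (hdiff (‖z‖ • u)).hasFDerivAt.comp_hasDerivAt ‖z‖ h1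
      rw [hzu] at this
      exact this
    have heq : (fun s : ℝ => f (s • u)) =ᶠ[nhds ‖z‖] g := by
      filter_upwards [Ioi_mem_nhds hr] with s hs
      exact hrad (s • u) (s • e) (by rw [norm_smul, norm_smul, hu1, he])
    have hgder : HasDerivAt g ((fderiv ℝ f z) u) ‖z‖ := HasDerivAt.congr_of_eventuallyEq h2 heq.symm
    rw [hgder.deriv]
    calc ‖(fderiv ℝ f z) u‖ ≤ ‖fderiv ℝ f z‖ * ‖u‖ := (fderiv ℝ f z).le_opNorm u
      _ = ‖fderiv ℝ f z‖ := by rw [hu1, mul_one]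
  set q : ℝ → ℝ := fun s => ‖g s‖ ^ 2 with hq_def
  set G : ℝ → ℝ := fun s => ‖deriv g s‖ ^ 2 with hG_def
  have hq_cont : Continuous q := by fun_prop
  have hG_meas : Measurable G := ((measurable_deriv g).norm.pow_const 2)
  have hfq : (fun z : EuclideanSpace ℝ (Fin d) => ‖f z‖ ^ 2) = fun z => q ‖z‖ := funext fun z => by rw [hge z]
  have hI1' : Integrable (fun z : EuclideanSpace ℝ (Fin d) => q ‖z‖) volume := by rw [← hfq]; exact hI1
  have hq0 : ∀ s, 0 ≤ q s := fun s => sq_nonneg _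
  have hG0 : ∀ s, 0 ≤ G s := fun s => sq_nonneg _
  -- a.e. away from 0
  have h0ae : ∀ᵐ (z : EuclideanSpace ℝ (Fin d)) ∂volume, z ≠ 0 := by
    refine ae_iff.2 ?_
    simpa [not_not] using measure_singleton (0 : EuclideanSpace ℝ (Fin d))
  have hG_dom : Integrable (fun z : EuclideanSpace ℝ (Fin d) => G ‖z‖) volume := by
    refine hI2.mono' ((hG_meas.comp measurable_norm).aestronglyMeasurable) ?_
    filter_upwards [h0ae] with z hz
    have h1 : ‖deriv g ‖z‖‖ ≤ ‖fderiv ℝ f z‖ := key z hz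
    have : G ‖z‖ ≤ ‖fderiv ℝ f z‖ ^ 2 := by
      simp only [hG_def]
      exact pow_le_pow_left₀ (norm_nonneg _) h1 2
    simpa [abs_of_nonneg (hG0 ‖z‖)] using this
  -- transfer to radial integrals
  have hA_int : IntegrableOn (fun s => s ^ (d - 1) * q s) (Set.Ioi (0:ℝ)) := by
    have := my_integrableOn_polar volume hq_cont.measurable hq0 hI1'
    simpa [hrank] using this
  have hB_int : IntegrableOn (fun s => s ^ (d - 1) * G s) (Set.Ioi (0:ℝ)) := by
    have := my_integrableOn_polar volume hG_meas hG0 hG_dom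
    simpa [hrank] using this
  set A : ℝ := ∫ s in Set.Ioi (0:ℝ), s ^ (d - 1) * q s with hA_def
  set B : ℝ := ∫ s in Set.Ioi (0:ℝ), s ^ (d - 1) * G s with hB_def
  set I₁ : ℝ := ∫ y : EuclideanSpace ℝ (Fin d), ‖f y‖ ^ 2 with hI₁_def
  set I₂ : ℝ := ∫ y : EuclideanSpace ℝ (Fin d), ‖fderiv ℝ f y‖ ^ 2 with hI₂_def
  have hI₁0 : 0 ≤ I₁ := integral_nonneg fun y => sq_nonneg _
  have hI₂0 : 0 ≤ I₂ := integral_nonneg fun y => sq_nonneg _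
  have hA0 : 0 ≤ A := setIntegral_nonneg measurableSet_Ioi fun s hs =>
    mul_nonneg (pow_nonneg (le_of_lt hs) _) (hq0 s)
  have hB0 : 0 ≤ B := setIntegral_nonneg measurableSet_Ioi fun s hs =>
    mul_nonneg (pow_nonneg (le_of_lt hs) _) (hG0 s)
  have hA_eq : I₁ = c * A := by
    have h := integral_fun_norm_addHaar (volume : Measure (EuclideanSpace ℝ (Fin d))) q
    rw [hI₁_def, hfq, h]
    simp only [smul_eq_mul, nsmul_eq_mul, hrank, measureReal_def]
    rw [hA_def, hc_def, hcball_def]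
    ring
  have hB_le : c * B ≤ I₂ := by
    have h := integral_fun_norm_addHaar (volume : Measure (EuclideanSpace ℝ (Fin d))) G
    have h2 : ∫ z : EuclideanSpace ℝ (Fin d), G ‖z‖ = c * B := by
      rw [h]
      simp only [smul_eq_mul, nsmul_eq_mul, hrank, measureReal_def]
      rw [hB_def, hc_def, hcball_def]
      ring
    rw [← h2]
    refine integral_mono_ae hG_dom hI2 ?_
    filter_upwards [h0ae] with z hz
    have h1 : ‖deriv g ‖z‖‖ ≤ ‖fderiv ℝ f z‖ := key z hz
    exact pow_le_pow_left₀ (norm_nonneg _) h1 2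
  -- the main 1-dimensional estimate
  have hr : 0 < ‖x‖ := norm_pos_iff.2 hx
  set r : ℝ := ‖x‖ with hr_def
  set φ : ℝ → ℝ := fun s => s ^ (d - 1) * q s with hφ_def
  set φ' : ℝ → ℝ := fun s =>
    ↑(d - 1) * s ^ (d - 1 - 1) * q s + s ^ (d - 1) * (2 * (inner ℝ (g s) (deriv g s) : ℝ))
    with hφ'_def
  have hφd : ∀ s : ℝ, HasDerivAt φ (φ' s) s := fun s =>
    (hasDerivAt_pow (d - 1) s).mul ((hgd' s).norm_sq)
  have hmain : ∀ t : ℝ, 0 < t → φ r ≤ t * A + t⁻¹ * B := by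
    intro t ht
    have ht' : 0 < t⁻¹ := inv_pos.2 ht
    set m : ℝ → ℝ := fun s => t * (s ^ (d - 1) * q s) + t⁻¹ * (s ^ (d - 1) * G s) with hm_def
    have hm_int : IntegrableOn m (Set.Ioi (0:ℝ)) :=
      (hA_int.const_mul t).add (hB_int.const_mul t⁻¹)
    have hm_Ioi : ∫ s in Set.Ioi (0:ℝ), m s = t * A + t⁻¹ * B := by
      rw [hm_def]
      rw [integral_add (hA_int.const_mul t) (hB_int.const_mul t⁻¹),
        integral_const_mul, integral_const_mul]
    have step : ∀ R : ℝ, r < R → φ r ≤ φ R + (t * A + t⁻¹ * B) := by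
      intro R hR
      have hsub : Set.uIcc r R ⊆ Set.Ioi (0:ℝ) := by
        rw [Set.uIcc_of_le hR.le]
        exact fun s hs => lt_of_lt_of_le hr hs.1
      have hsub' : Set.uIoc r R ⊆ Set.Ioi (0:ℝ) := Set.uIoc_subset_uIcc.trans hsub
      have hm_ii : IntervalIntegrable m volume r R :=
        (IntegrableOn.mono_set hm_int hsub).intervalIntegrable
      have hM_ii : IntervalIntegrable (fun s => s ^ (d - 1) * q s + s ^ (d - 1) * G s)
          volume r R := (IntegrableOn.mono_set (hA_int.add hB_int) hsub).intervalIntegrable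
      have hφ'_ii : IntervalIntegrable φ' volume r R := by
        have h1 : IntervalIntegrable (fun s => (↑(d - 1) : ℝ) * s ^ (d - 1 - 1) * q s)
            volume r R :=
          ((continuous_const.mul (continuous_pow _)).mul hq_cont).intervalIntegrable r R
        have h2 : IntervalIntegrable
            (fun s => s ^ (d - 1) * (2 * (inner ℝ (g s) (deriv g s) : ℝ))) volume r R := by
          refine hM_ii.mono_fun ?_ ?_
          · exact ((measurable_id.pow_const (d-1)).mul
              ((measurable_const.mul (hgc.measurable.inner (measurable_deriv g))))).aestronglyMeasurable
          · filter_upwards [ae_restrict_mem measurableSet_uIoc] with s hs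
            have hs0 : 0 < s := hsub' hs
            have hin : |(inner ℝ (g s) (deriv g s) : ℝ)| ≤ ‖g s‖ * ‖deriv g s‖ :=
              abs_real_inner_le_norm _ _
            have hsq : 2 * (‖g s‖ * ‖deriv g s‖) ≤ q s + G s := by
              simp only [hq_def, hG_def]
              nlinarith [sq_nonneg (‖g s‖ - ‖deriv g s‖)]
            have hpk : (0:ℝ) ≤ s ^ (d - 1) := pow_nonneg hs0.le _
            rw [Real.norm_eq_abs, abs_mul, abs_of_nonneg hpk, Real.norm_eq_abs]
            have h3 : |2 * (inner ℝ (g s) (deriv g s) : ℝ)| ≤ q s + G s := by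
              rw [abs_mul, abs_two]
              nlinarith
            calc s ^ (d-1) * |2 * (inner ℝ (g s) (deriv g s) : ℝ)|
                ≤ s ^ (d-1) * (q s + G s) := by
                  exact mul_le_mul_of_nonneg_left h3 hpk
              _ = s ^ (d-1) * q s + s ^ (d-1) * G s := by ring
              _ ≤ |s ^ (d-1) * q s + s ^ (d-1) * G s| := le_abs_self _
        exact h1.add h2
      have hFTC : ∫ s in r..R, φ' s = φ R - φ r :=
        intervalIntegral.integral_eq_sub_of_hasDerivAt (fun s _ => hφd s) hφ'_ii
      have hptwise : ∀ s ∈ Set.Icc r R, -(m s) ≤ φ' s := by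
        intro s hs
        have hs0 : 0 < s := lt_of_lt_of_le hr hs.1
        have hin : |(inner ℝ (g s) (deriv g s) : ℝ)| ≤ ‖g s‖ * ‖deriv g s‖ :=
          abs_real_inner_le_norm _ _
        have h2ab : 2 * (‖g s‖ * ‖deriv g s‖) ≤ t * q s + t⁻¹ * G s := by
          simp only [hq_def, hG_def]
          nlinarith [mul_nonneg ht'.le (sq_nonneg (t * ‖g s‖ - ‖deriv g s‖)),
            mul_inv_cancel₀ ht.ne']
        have h3 : -(t * q s + t⁻¹ * G s) ≤ 2 * (inner ℝ (g s) (deriv g s) : ℝ) := by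
          linarith [neg_abs_le (inner ℝ (g s) (deriv g s) : ℝ)]
        have hpk : (0:ℝ) ≤ s ^ (d - 1) := pow_nonneg hs0.le _
        have h4 := mul_le_mul_of_nonneg_left h3 hpk
        have h5 : (0:ℝ) ≤ (↑(d - 1) : ℝ) * s ^ (d - 1 - 1) * q s := by
          have : (0:ℝ) ≤ (↑(d - 1) : ℝ) := by positivity
          exact mul_nonneg (mul_nonneg this (pow_nonneg hs0.le _)) (hq0 s)
        simp only [hφ'_def, hm_def]
        nlinarith
      have hmono : ∫ s in r..R, -(m s) ≤ ∫ s in r..R, φ' s :=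
        intervalIntegral.integral_mono_on hR.le hm_ii.neg hφ'_ii hptwise
      rw [intervalIntegral.integral_neg, hFTC] at hmono
      have hms : ∫ s in r..R, m s ≤ ∫ s in Set.Ioi (0:ℝ), m s := by
        rw [intervalIntegral.integral_of_le hR.le]
        refine setIntegral_mono_set hm_int ?_ ?_
        · filter_upwards [ae_restrict_mem measurableSet_Ioi] with s hs
          have hs0 : 0 < s := hs
          have hpk : (0:ℝ) ≤ s ^ (d - 1) := pow_nonneg hs0.le _
          simp only [hm_def, Pi.zero_apply]
          have := hq0 s; have := hG0 s
          positivity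
        · exact Filter.Eventually.of_forall
            (fun s hs => lt_of_lt_of_le hr (Set.mem_Ioc.mp hs).1.le)
      rw [hm_Ioi] at hms
      linarith
    -- φ becomes small along a sequence
    have hRsmall : ∀ ε : ℝ, 0 < ε → ∃ R : ℝ, r < R ∧ φ R ≤ ε := by
      intro ε hε
      by_contra hcon
      push_neg at hcon
      have hconst : Integrable (fun _ : ℝ => ε) (volume.restrict (Set.Ioi r)) := by
        refine (IntegrableOn.mono_set hA_int (Set.Ioi_subset_Ioi hr.le)).mono'
          aestronglyMeasurable_const ?_
        filter_upwards [ae_restrict_mem measurableSet_Ioi] with s hs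
        rw [Real.norm_eq_abs, abs_of_pos hε]
        exact (hcon s hs).le
      rcases integrable_const_iff.mp hconst with h | h
      · exact hε.ne' h
      · have h := h.measure_univ_lt_top
        rw [Measure.restrict_apply_univ, Real.volume_Ioi] at h
        exact (lt_irrefl _ h).elim
    by_contra hcontra
    push_neg at hcontra
    obtain ⟨R, hRr, hRε⟩ := hRsmall ((φ r - (t * A + t⁻¹ * B)) / 2) (by linarith)
    have := step R hRr
    linarith
  -- combine
  have hφr : φ r ≤ 2 * (Real.sqrt (I₁ / c) * Real.sqrt (I₂ / c)) := by
    refine my_amgm (by positivity) (by positivity) ?_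
    intro t ht
    have h1 := hmain t ht
    have h2 : A = I₁ / c := by rw [hA_eq]; field_simp
    have h3 : B ≤ I₂ / c := by rw [le_div_iff₀ hc]; linarith [hB_le]
    have ht' : 0 < t⁻¹ := inv_pos.2 ht
    calc φ r ≤ t * A + t⁻¹ * B := h1
      _ ≤ t * (I₁ / c) + t⁻¹ * (I₂ / c) := by
          rw [h2]
          exact add_le_add le_rfl (mul_le_mul_of_nonneg_left h3 ht'.le)
  -- final rpow manipulations
  have hfx : ‖f x‖ = ‖g r‖ := by rw [hge x]
  have hLHS0 : 0 ≤ ‖x‖ ^ (((d : ℝ) - 1) / 2) * ‖f x‖ :=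
    mul_nonneg (Real.rpow_nonneg (norm_nonneg x) _) (norm_nonneg _)
  have hRHS0 : 0 ≤ Real.sqrt (2 / c) * I₁ ^ ((1:ℝ)/4) * I₂ ^ ((1:ℝ)/4) := by
    have := Real.sqrt_nonneg (2 / c)
    have := Real.rpow_nonneg hI₁0 ((1:ℝ)/4)
    have := Real.rpow_nonneg hI₂0 ((1:ℝ)/4)
    positivity
  have hsq : (‖x‖ ^ (((d : ℝ) - 1) / 2) * ‖f x‖) ^ 2
      ≤ (Real.sqrt (2 / c) * I₁ ^ ((1:ℝ)/4) * I₂ ^ ((1:ℝ)/4)) ^ 2 := by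
    have hL : (‖x‖ ^ (((d : ℝ) - 1) / 2) * ‖f x‖) ^ 2 = φ r := by
      rw [mul_pow, hfx]; simp only [hφ_def, hq_def]
      congr 1
      rw [← Real.rpow_natCast (‖x‖ ^ (((d : ℝ) - 1) / 2)) 2, ← Real.rpow_mul (norm_nonneg x)]
      rw [show ((d : ℝ) - 1) / 2 * ((2:ℕ):ℝ) = ((d - 1 : ℕ) : ℝ) by
        push_cast [Nat.cast_sub (by omega : 1 ≤ d)]; ring]
      rw [Real.rpow_natCast]
    have hR : (Real.sqrt (2 / c) * I₁ ^ ((1:ℝ)/4) * I₂ ^ ((1:ℝ)/4)) ^ 2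
        = (2 / c) * (Real.sqrt I₁ * Real.sqrt I₂) := by
      rw [mul_pow, mul_pow, Real.sq_sqrt (by positivity)]
      rw [← Real.rpow_natCast (I₁ ^ ((1:ℝ)/4)) 2, ← Real.rpow_mul hI₁0,
        ← Real.rpow_natCast (I₂ ^ ((1:ℝ)/4)) 2, ← Real.rpow_mul hI₂0]
      norm_num
      rw [Real.sqrt_eq_rpow, Real.sqrt_eq_rpow]
      ring_nf
    rw [hL, hR]
    have hc' : 2 * (Real.sqrt (I₁ / c) * Real.sqrt (I₂ / c))
        = (2 / c) * (Real.sqrt I₁ * Real.sqrt I₂) := by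
      have hsc : Real.sqrt c * Real.sqrt c = c := Real.mul_self_sqrt hc.le
      rw [Real.sqrt_div hI₁0, Real.sqrt_div hI₂0, div_mul_div_comm, hsc]
      ring
    rw [← hc']
    exact hφr
  calc ‖x‖ ^ (((d : ℝ) - 1) / 2) * ‖f x‖
      = Real.sqrt ((‖x‖ ^ (((d : ℝ) - 1) / 2) * ‖f x‖) ^ 2) := (Real.sqrt_sq hLHS0).symm
    _ ≤ Real.sqrt ((Real.sqrt (2 / c) * I₁ ^ ((1:ℝ)/4) * I₂ ^ ((1:ℝ)/4)) ^ 2) :=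
        Real.sqrt_le_sqrt hsq
    _ = Real.sqrt (2 / c) * I₁ ^ ((1:ℝ)/4) * I₂ ^ ((1:ℝ)/4) := Real.sqrt_sq hRHS0
end
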